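/- Let v₁,…,v_d be vectors in an inner product space with ‖v_j‖ ≤ C for all j, and suppose Σ_{1≤j<l≤d} ‖v_j − v_l‖² ≤ ε. Then for any indices j,l,k,m, |⟨v_j, v_l⟩ − ⟨v_k, v_m⟩| ≤ 2C·√ε. -/

import Mathlib

theorem stmt2 {E : Type*} [NormedAddCommGroup E] [InnerProductSpace ℝ E]
    (d : ℕ) (v : Fin d → E) (C ε : ℝ) (hC : 0 < C) (hε : 0 ≤ ε)
    (hv : ∀ j, ‖v j‖ ≤ C)
    (hsum : ∑ j : Fin d, ∑ l : Fin d, (if j < l then ‖v j - v l‖ ^ 2 else 0) ≤ ε) :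
    ∀ j l k m : Fin d,
      |(inner ℝ (v j) (v l) : ℝ) - (inner ℝ (v k) (v m) : ℝ)| ≤ 2 * C * Real.sqrt ε := by
  have hterm : ∀ a b : Fin d, a < b → ‖v a - v b‖ ^ 2 ≤ ε := by
    intro a b hab
    have h1 : (if a < b then ‖v a - v b‖ ^ 2 else 0) ≤
        ∑ l : Fin d, (if a < l then ‖v a - v l‖ ^ 2 else 0) := by
      apply Finset.single_le_sum (f := fun l => if a < l then ‖v a - v l‖ ^ 2 else 0)
      · intro i _; positivity
      · exact Finset.mem_univ b
    have h2 : ∑ l : Fin d, (if a < l then ‖v a - v l‖ ^ 2 else 0) ≤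
        ∑ j : Fin d, ∑ l : Fin d, (if j < l then ‖v j - v l‖ ^ 2 else 0) := by
      apply Finset.single_le_sum
        (f := fun j => ∑ l : Fin d, (if j < l then ‖v j - v l‖ ^ 2 else 0))
      · intro i _; apply Finset.sum_nonneg; intro l _; positivity
      · exact Finset.mem_univ a
    simp only [if_pos hab] at h1
    linarith
  have hdist : ∀ a b : Fin d, ‖v a - v b‖ ≤ Real.sqrt ε := by
    intro a b
    rcases lt_trichotomy a b with h | h | h
    · have := hterm a b h
      calc ‖v a - v b‖ = Real.sqrt (‖v a - v b‖ ^ 2) := by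
            rw [Real.sqrt_sq (norm_nonneg _)]
        _ ≤ Real.sqrt ε := Real.sqrt_le_sqrt this
    · simp [h, Real.sqrt_nonneg]
    · have := hterm b a h
      rw [show v a - v b = -(v b - v a) by abel, norm_neg]
      calc ‖v b - v a‖ = Real.sqrt (‖v b - v a‖ ^ 2) := by
            rw [Real.sqrt_sq (norm_nonneg _)]
        _ ≤ Real.sqrt ε := Real.sqrt_le_sqrt this
  intro j l k m
  have key : (inner ℝ (v j) (v l) : ℝ) - inner ℝ (v k) (v m)
      = inner ℝ (v j - v k) (v l) + inner ℝ (v k) (v l - v m) := by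
    rw [inner_sub_left, inner_sub_right]; ring
  rw [key]
  calc |(inner ℝ (v j - v k) (v l) : ℝ) + inner ℝ (v k) (v l - v m)|
      ≤ |(inner ℝ (v j - v k) (v l) : ℝ)| + |(inner ℝ (v k) (v l - v m) : ℝ)| := abs_add_le _ _
    _ ≤ ‖v j - v k‖ * ‖v l‖ + ‖v k‖ * ‖v l - v m‖ := by
        gcongr <;> exact abs_real_inner_le_norm _ _
    _ ≤ Real.sqrt ε * C + C * Real.sqrt ε := by
        gcongr <;> first | exact hv _ | exact hdist _ _ | exact norm_nonneg _
    _ = 2 * C * Real.sqrt ε := by ring
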